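/- Let T > 0, m ≥ 0, let A₀, A₁ : ℝ × [0,T] → ℝ be continuous, and let u, v : ℝ × [0,T] → ℂ be C¹ solutions of the Dirac system (∂_t + ∂_x)u = −imv + i(A₀+A₁)u + 2i|v|²u + 2i Re(u v̄)v and (∂_t − ∂_x)v = −imu + i(A₀−A₁)v + 2i|u|²v + 2i Re(u v̄)u. Then for all real numbers a < b and all t ∈ [0,T], ∫_a^b (|u(x,t)|² + |v(x,t)|²) dx ≤ ∫_{a−t}^{b+t} (|u(x,0)|² + |v(x,0)|²) dx. -/

import Mathlib

open MeasureTheory Set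

/-- The Dirac (spinor) part of the Maxwell–Dirac–Thirring–Gross–Neveu system on the
time slab `ℝ × [0,T]`, in null-coordinate form, with all coupling constants equal to `1`
and mass `m`:
`(∂_t + ∂_x)u = −imv + i(A₀+A₁)u + 2i|v|²u + 2i Re(u v̄)v`,
`(∂_t − ∂_x)v = −imu + i(A₀−A₁)v + 2i|u|²v + 2i Re(u v̄)u`. -/
def DiracSystem (m T : ℝ) (A₀ A₁ : ℝ → ℝ → ℝ) (u v : ℝ → ℝ → ℂ) : Prop :=
  ∀ x : ℝ, ∀ t ∈ Set.Icc (0:ℝ) T,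
    (deriv (fun τ => u x τ) t + deriv (fun ξ => u ξ t) x =
      -Complex.I * (m : ℂ) * v x t
      + Complex.I * ((A₀ x t + A₁ x t : ℝ) : ℂ) * u x t
      + 2 * Complex.I * ((‖v x t‖ ^ 2 : ℝ) : ℂ) * u x t
      + 2 * Complex.I * (((u x t * (starRingEnd ℂ) (v x t)).re : ℝ) : ℂ) * v x t)
    ∧
    (deriv (fun τ => v x τ) t - deriv (fun ξ => v ξ t) x =
      -Complex.I * (m : ℂ) * u x t
      + Complex.I * ((A₀ x t - A₁ x t : ℝ) : ℂ) * v x t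
      + 2 * Complex.I * ((‖u x t‖ ^ 2 : ℝ) : ℂ) * v x t
      + 2 * Complex.I * (((u x t * (starRingEnd ℂ) (v x t)).re : ℝ) : ℂ) * u x t)

section Aux

lemma hasDerivAt_normSq' {w : ℝ → ℂ} {w' : ℂ} {s : ℝ} (h : HasDerivAt w w' s) :
    HasDerivAt (fun τ => ‖w τ‖^2) (2 * ((starRingEnd ℂ) (w s) * w').re) s := by
  have hre : HasDerivAt (fun τ => (w τ).re) w'.re s :=
    Complex.reCLM.hasFDerivAt.comp_hasDerivAt s h
  have him : HasDerivAt (fun τ => (w τ).im) w'.im s :=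
    Complex.imCLM.hasFDerivAt.comp_hasDerivAt s h
  have H : HasDerivAt (fun τ => (w τ).re * (w τ).re + (w τ).im * (w τ).im) _ s :=
    (hre.mul hre).add (him.mul him)
  have hfun : (fun τ => ‖w τ‖^2) = fun τ => (w τ).re * (w τ).re + (w τ).im * (w τ).im := by
    funext τ
    rw [Complex.sq_norm, Complex.normSq_apply]
  rw [hfun]
  convert H using 1
  simp [Complex.mul_re]
  ring

lemma hasDerivAt_moving' {f : ℝ → ℝ → ℝ} (hf : Continuous fun p : ℝ × ℝ => f p.1 p.2)
    (c e s₀ : ℝ) (he : |e| = 1) :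
    HasDerivAt (fun s => ∫ x in c..(c + e * (s - s₀)), f x s) (e * f c s₀) s₀ := by
  rw [hasDerivAt_iff_isLittleO, Asymptotics.isLittleO_iff]
  intro ε hε
  obtain ⟨δ, hδ, hcont⟩ := Metric.continuousAt_iff.mp (hf.continuousAt (x := (c, s₀))) ε hε
  filter_upwards [Metric.ball_mem_nhds s₀ hδ] with s hs
  have hss : |s - s₀| < δ := by rw [← Real.dist_eq]; exact hs
  set d := c + e * (s - s₀) with hd_def
  have hdc : |d - c| = |s - s₀| := by
    rw [hd_def, add_sub_cancel_left, abs_mul, he, one_mul]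
  have h0 : (∫ x in c..(c + e * (s₀ - s₀)), f x s₀) = 0 := by simp
  have hint1 : IntervalIntegrable (fun x => f x s) volume c d :=
    (hf.comp (continuous_id.prodMk continuous_const)).intervalIntegrable _ _
  have hconst : (s - s₀) • (e * f c s₀) = ∫ _x in c..d, f c s₀ := by
    rw [intervalIntegral.integral_const, hd_def, add_sub_cancel_left, smul_eq_mul, smul_eq_mul]
    ring
  have hsplit : (∫ x in c..d, f x s) - 0 - (s - s₀) • (e * f c s₀)
      = ∫ x in c..d, (f x s - f c s₀) := by
    rw [hconst, sub_zero, intervalIntegral.integral_sub hint1 intervalIntegrable_const]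
  rw [h0, hsplit]
  have hb : ∀ x ∈ Set.uIoc c d, ‖f x s - f c s₀‖ ≤ ε := by
    intro x hx
    have hx' : |x - c| ≤ |d - c| :=
      abs_sub_le_of_uIcc_subset_uIcc (uIcc_subset_uIcc left_mem_uIcc (Set.uIoc_subset_uIcc hx))
    have hxc : |x - c| < δ := lt_of_le_of_lt (hx'.trans hdc.le) hss
    have hdxy : dist (x, s) (c, s₀) < δ := by
      rw [Prod.dist_eq]
      exact max_lt (by rwa [Real.dist_eq]) (by rwa [Real.dist_eq])
    have := hcont hdxy
    rw [Real.norm_eq_abs, ← Real.dist_eq]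
    exact le_of_lt this
  calc ‖∫ x in c..d, (f x s - f c s₀)‖
      ≤ ε * |d - c| := intervalIntegral.norm_integral_le_of_norm_le_const hb
    _ = ε * ‖s - s₀‖ := by rw [hdc]; rfl

noncomputable def pdx (w : ℝ → ℝ → ℂ) (x s : ℝ) : ℂ :=
  fderiv ℝ (Function.uncurry w) (x, s) (1, 0)
noncomputable def pdt (w : ℝ → ℝ → ℂ) (x s : ℝ) : ℂ :=
  fderiv ℝ (Function.uncurry w) (x, s) (0, 1)

lemma hasDerivAt_pdx {w : ℝ → ℝ → ℂ} (hw : ContDiff ℝ 1 (Function.uncurry w)) (x s : ℝ) :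
    HasDerivAt (fun ξ => w ξ s) (pdx w x s) x := by
  have h := (hw.differentiable one_ne_zero (x, s)).hasFDerivAt
  have hl : HasDerivAt (fun ξ : ℝ => ((ξ, s) : ℝ × ℝ)) ((1 : ℝ), (0 : ℝ)) x :=
    (hasDerivAt_id x).prodMk (hasDerivAt_const x s)
  exact h.comp_hasDerivAt x hl

lemma hasDerivAt_pdt {w : ℝ → ℝ → ℂ} (hw : ContDiff ℝ 1 (Function.uncurry w)) (x s : ℝ) :
    HasDerivAt (fun τ => w x τ) (pdt w x s) s := by
  have h := (hw.differentiable one_ne_zero (x, s)).hasFDerivAt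
  have hl : HasDerivAt (fun τ : ℝ => ((x, τ) : ℝ × ℝ)) ((0 : ℝ), (1 : ℝ)) s :=
    (hasDerivAt_const s x).prodMk (hasDerivAt_id s)
  exact h.comp_hasDerivAt s hl

lemma continuous_pdx {w : ℝ → ℝ → ℂ} (hw : ContDiff ℝ 1 (Function.uncurry w)) :
    Continuous (fun p : ℝ × ℝ => pdx w p.1 p.2) :=
  (ContinuousLinearMap.apply ℝ ℂ (((1 : ℝ), (0 : ℝ)) : ℝ × ℝ)).continuous.comp
    (hw.continuous_fderiv one_ne_zero)

lemma continuous_pdt {w : ℝ → ℝ → ℂ} (hw : ContDiff ℝ 1 (Function.uncurry w)) :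
    Continuous (fun p : ℝ × ℝ => pdt w p.1 p.2) :=
  (ContinuousLinearMap.apply ℝ ℂ (((0 : ℝ), (1 : ℝ)) : ℝ × ℝ)).continuous.comp
    (hw.continuous_fderiv one_ne_zero)

noncomputable def rho (u v : ℝ → ℝ → ℂ) (x s : ℝ) : ℝ := ‖u x s‖ ^ 2 + ‖v x s‖ ^ 2
noncomputable def rhoT (u v : ℝ → ℝ → ℂ) (x s : ℝ) : ℝ :=
  2 * ((starRingEnd ℂ) (u x s) * pdt u x s).re + 2 * ((starRingEnd ℂ) (v x s) * pdt v x s).re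
noncomputable def jX (u v : ℝ → ℝ → ℂ) (x s : ℝ) : ℝ :=
  2 * ((starRingEnd ℂ) (u x s) * pdx u x s).re - 2 * ((starRingEnd ℂ) (v x s) * pdx v x s).re

lemma continuous_rho {u v : ℝ → ℝ → ℂ} (hu : ContDiff ℝ 1 (Function.uncurry u))
    (hv : ContDiff ℝ 1 (Function.uncurry v)) :
    Continuous (fun p : ℝ × ℝ => rho u v p.1 p.2) :=
  ((hu.continuous.norm).pow 2).add ((hv.continuous.norm).pow 2)

lemma continuous_rhoT {u v : ℝ → ℝ → ℂ} (hu : ContDiff ℝ 1 (Function.uncurry u))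
    (hv : ContDiff ℝ 1 (Function.uncurry v)) :
    Continuous (fun p : ℝ × ℝ => rhoT u v p.1 p.2) := by
  apply Continuous.add
  · exact continuous_const.mul
      (Complex.continuous_re.comp ((hu.continuous.star).mul (continuous_pdt hu)))
  · exact continuous_const.mul
      (Complex.continuous_re.comp ((hv.continuous.star).mul (continuous_pdt hv)))

lemma continuous_jX {u v : ℝ → ℝ → ℂ} (hu : ContDiff ℝ 1 (Function.uncurry u))
    (hv : ContDiff ℝ 1 (Function.uncurry v)) :
    Continuous (fun p : ℝ × ℝ => jX u v p.1 p.2) := by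
  apply Continuous.sub
  · exact continuous_const.mul
      (Complex.continuous_re.comp ((hu.continuous.star).mul (continuous_pdx hu)))
  · exact continuous_const.mul
      (Complex.continuous_re.comp ((hv.continuous.star).mul (continuous_pdx hv)))

lemma hasDerivAt_rho_t {u v : ℝ → ℝ → ℂ} (hu : ContDiff ℝ 1 (Function.uncurry u))
    (hv : ContDiff ℝ 1 (Function.uncurry v)) (x s : ℝ) :
    HasDerivAt (fun σ => rho u v x σ) (rhoT u v x s) s :=
  (hasDerivAt_normSq' (hasDerivAt_pdt hu x s)).add (hasDerivAt_normSq' (hasDerivAt_pdt hv x s))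

lemma hasDerivAt_j_x {u v : ℝ → ℝ → ℂ} (hu : ContDiff ℝ 1 (Function.uncurry u))
    (hv : ContDiff ℝ 1 (Function.uncurry v)) (x s : ℝ) :
    HasDerivAt (fun ξ => ‖u ξ s‖ ^ 2 - ‖v ξ s‖ ^ 2) (jX u v x s) x :=
  (hasDerivAt_normSq' (hasDerivAt_pdx hu x s)).sub (hasDerivAt_normSq' (hasDerivAt_pdx hv x s))

end Aux

lemma key_identity {m T : ℝ} {A₀ A₁ : ℝ → ℝ → ℝ} {u v : ℝ → ℝ → ℂ}
    (hu : ContDiff ℝ 1 (Function.uncurry u)) (hv : ContDiff ℝ 1 (Function.uncurry v))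
    (hsol : DiracSystem m T A₀ A₁ u v) (x : ℝ) {s : ℝ} (hs : s ∈ Set.Icc (0:ℝ) T) :
    rhoT u v x s = -jX u v x s := by
  obtain ⟨e1, e2⟩ := hsol x s hs
  rw [(hasDerivAt_pdt hu x s).deriv, (hasDerivAt_pdx hu x s).deriv] at e1
  rw [(hasDerivAt_pdt hv x s).deriv, (hasDerivAt_pdx hv x s).deriv] at e2
  have h1 : pdt u x s = (-Complex.I * (m : ℂ) * v x s
      + Complex.I * ((A₀ x s + A₁ x s : ℝ) : ℂ) * u x s
      + 2 * Complex.I * ((‖v x s‖ ^ 2 : ℝ) : ℂ) * u x s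
      + 2 * Complex.I * (((u x s * (starRingEnd ℂ) (v x s)).re : ℝ) : ℂ) * v x s)
      - pdx u x s := by linear_combination e1
  have h2 : pdt v x s = (-Complex.I * (m : ℂ) * u x s
      + Complex.I * ((A₀ x s - A₁ x s : ℝ) : ℂ) * v x s
      + 2 * Complex.I * ((‖u x s‖ ^ 2 : ℝ) : ℂ) * v x s
      + 2 * Complex.I * (((u x s * (starRingEnd ℂ) (v x s)).re : ℝ) : ℂ) * u x s)
      + pdx v x s := by linear_combination e2
  simp only [rhoT, jX, h1, h2]
  simp only [Complex.mul_re, Complex.mul_im, Complex.add_re, Complex.add_im, Complex.sub_re,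
    Complex.sub_im, Complex.neg_re, Complex.neg_im, Complex.I_re, Complex.I_im,
    Complex.ofReal_re, Complex.ofReal_im, Complex.conj_re, Complex.conj_im,
    Complex.mul_re, Complex.mul_im, Complex.re_ofNat, Complex.im_ofNat]
  ring

/-- The local charge is nonincreasing on spatial slices of a backward light cone: for `C¹`
solutions of the Dirac system, for all `a < b` and `t ∈ [0,T]`,
`∫_a^b (|u(x,t)|² + |v(x,t)|²) dx ≤ ∫_{a−t}^{b+t} (|u(x,0)|² + |v(x,0)|²) dx`. -/
theorem local_charge_monotone (T m : ℝ) (hT : 0 < T) (hm : 0 ≤ m)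
    (A₀ A₁ : ℝ → ℝ → ℝ) (hA₀ : Continuous (Function.uncurry A₀))
    (hA₁ : Continuous (Function.uncurry A₁))
    (u v : ℝ → ℝ → ℂ)
    (hu : ContDiff ℝ 1 (Function.uncurry u)) (hv : ContDiff ℝ 1 (Function.uncurry v))
    (hsol : DiracSystem m T A₀ A₁ u v) :
    ∀ a b : ℝ, a < b → ∀ t ∈ Set.Icc (0:ℝ) T,
      (∫ x in a..b, (‖u x t‖ ^ 2 + ‖v x t‖ ^ 2))
        ≤ ∫ x in (a - t)..(b + t), (‖u x 0‖ ^ 2 + ‖v x 0‖ ^ 2) := by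
  intro a b hab t ht
  have hρc := continuous_rho hu hv
  have hρTc := continuous_rhoT hu hv
  have hjc := continuous_jX hu hv
  have hρint : ∀ (s c d : ℝ), IntervalIntegrable (fun x => rho u v x s) volume c d :=
    fun s c d => (hρc.comp (continuous_id.prodMk continuous_const)).intervalIntegrable c d
  have hρTint : ∀ (s c d : ℝ), IntervalIntegrable (fun x => rhoT u v x s) volume c d :=
    fun s c d => (hρTc.comp (continuous_id.prodMk continuous_const)).intervalIntegrable c d
  have hjint : ∀ (s c d : ℝ), IntervalIntegrable (fun x => jX u v x s) volume c d :=
    fun s c d => (hjc.comp (continuous_id.prodMk continuous_const)).intervalIntegrable c d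
  -- the light-cone charge
  set F : ℝ → ℝ := fun s => ∫ x in (a - t + s)..(b + t - s), rho u v x s with hF
  -- FTC for the flux term
  have hFTC : ∀ s ∈ Set.Icc (0:ℝ) T, ∀ α β : ℝ,
      (∫ x in α..β, rhoT u v x s)
        = (‖u α s‖ ^ 2 - ‖v α s‖ ^ 2) - (‖u β s‖ ^ 2 - ‖v β s‖ ^ 2) := by
    intro s hs α β
    have hcg : (∫ x in α..β, rhoT u v x s) = ∫ x in α..β, -jX u v x s :=
      intervalIntegral.integral_congr (fun x _ => key_identity hu hv hsol x hs)
    rw [hcg, intervalIntegral.integral_neg,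
      intervalIntegral.integral_eq_sub_of_hasDerivAt (fun x _ => hasDerivAt_j_x hu hv x s)
        (hjint s α β)]
    ring
  -- derivative of F at every point of [0,T]
  have hFd : ∀ s₀ ∈ Set.Icc (0:ℝ) T,
      HasDerivAt F (-2 * ‖u (b + t - s₀) s₀‖ ^ 2 - 2 * ‖v (a - t + s₀) s₀‖ ^ 2) s₀ := by
    intro s₀ hs₀
    set α₀ := a - t + s₀ with hα₀
    set β₀ := b + t - s₀ with hβ₀
    -- fixed-endpoint part, by differentiation under the integral sign
    obtain ⟨M, hM⟩ := (isCompact_uIcc.prod (isCompact_Icc (a := s₀ - 1) (b := s₀ + 1))).exists_bound_of_continuousOn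
      (hρTc.continuousOn (s := uIcc α₀ β₀ ×ˢ Set.Icc (s₀ - 1) (s₀ + 1)))
    have hA : HasDerivAt (fun s => ∫ x in α₀..β₀, rho u v x s)
        (∫ x in α₀..β₀, rhoT u v x s₀) s₀ := by
      refine (intervalIntegral.hasDerivAt_integral_of_dominated_loc_of_deriv_le
        (F := fun s x => rho u v x s) (F' := fun s x => rhoT u v x s)
        (bound := fun _ => M) (Metric.ball_mem_nhds s₀ one_pos)
        (Filter.Eventually.of_forall fun s =>
          ((hρc.comp (continuous_id.prodMk continuous_const)).aestronglyMeasurable))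
        (hρint s₀ α₀ β₀)
        ((hρTc.comp (continuous_id.prodMk continuous_const)).aestronglyMeasurable)
        (Filter.Eventually.of_forall ?_)
        intervalIntegrable_const
        (Filter.Eventually.of_forall fun x _ s _ => hasDerivAt_rho_t hu hv x s)).2
      intro x hx s hs
      refine hM (x, s) ⟨Set.uIoc_subset_uIcc hx, ?_⟩
      have : |s - s₀| < 1 := by rw [← Real.dist_eq]; exact hs
      constructor <;> [linarith [abs_sub_lt_iff.mp this]; linarith [abs_sub_lt_iff.mp this]]
    -- moving-endpoint parts
    have hB : HasDerivAt (fun s => ∫ x in β₀..(β₀ + (-1) * (s - s₀)), rho u v x s)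
        ((-1) * rho u v β₀ s₀) s₀ := hasDerivAt_moving' hρc β₀ (-1) s₀ (by norm_num)
    have hC : HasDerivAt (fun s => ∫ x in α₀..(α₀ + 1 * (s - s₀)), rho u v x s)
        (1 * rho u v α₀ s₀) s₀ := hasDerivAt_moving' hρc α₀ 1 s₀ (by norm_num)
    have hFeq : F = fun s => ((∫ x in α₀..β₀, rho u v x s)
        + ∫ x in β₀..(β₀ + (-1) * (s - s₀)), rho u v x s)
        - ∫ x in α₀..(α₀ + 1 * (s - s₀)), rho u v x s := by
      funext s
      have e1 : α₀ + 1 * (s - s₀) = a - t + s := by rw [hα₀]; ring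
      have e2 : β₀ + (-1) * (s - s₀) = b + t - s := by rw [hβ₀]; ring
      rw [hF]
      rw [e1, e2, intervalIntegral.integral_add_adjacent_intervals (hρint s α₀ β₀)
        (hρint s β₀ (b + t - s)),
        intervalIntegral.integral_interval_sub_left (hρint s α₀ (b + t - s))
          (hρint s α₀ (a - t + s))]
    have hsum : HasDerivAt (fun s => ((∫ x in α₀..β₀, rho u v x s)
        + ∫ x in β₀..(β₀ + (-1) * (s - s₀)), rho u v x s)
        - ∫ x in α₀..(α₀ + 1 * (s - s₀)), rho u v x s) _ s₀ := (hA.add hB).sub hC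
    rw [← hFeq] at hsum
    convert hsum using 1
    rw [hFTC s₀ hs₀ α₀ β₀]
    simp only [rho]
    ring
  -- monotonicity
  have hsub : Set.Icc (0:ℝ) t ⊆ Set.Icc (0:ℝ) T := Set.Icc_subset_Icc le_rfl ht.2
  have hmono : AntitoneOn F (Set.Icc 0 t) := by
    apply antitoneOn_of_deriv_nonpos (convex_Icc 0 t)
    · intro s hs
      exact ((hFd s (hsub hs)).continuousAt).continuousWithinAt
    · intro s hs
      rw [interior_Icc] at hs
      exact ((hFd s (hsub (Set.Ioo_subset_Icc_self hs))).differentiableAt).differentiableWithinAt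
    · intro s hs
      rw [interior_Icc] at hs
      rw [(hFd s (hsub (Set.Ioo_subset_Icc_self hs))).deriv]
      have h1 : (0:ℝ) ≤ ‖u (b + t - s) s‖ ^ 2 := sq_nonneg _
      have h2 : (0:ℝ) ≤ ‖v (a - t + s) s‖ ^ 2 := sq_nonneg _
      linarith
  have hle : F t ≤ F 0 := hmono ⟨le_rfl, ht.1⟩ ⟨ht.1, le_rfl⟩ ht.1
  have hFt : F t = ∫ x in a..b, (‖u x t‖ ^ 2 + ‖v x t‖ ^ 2) := by
    have e1 : a - t + t = a := by ring
    have e2 : b + t - t = b := by ring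
    simp only [hF, e1, e2, rho]
  have hF0 : F 0 = ∫ x in (a - t)..(b + t), (‖u x 0‖ ^ 2 + ‖v x 0‖ ^ 2) := by
    have e1 : a - t + 0 = a - t := by ring
    have e2 : b + t - 0 = b + t := by ring
    simp only [hF, e1, e2, rho]
  rw [← hFt, ← hF0]
  exact hle
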